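/- Let 0 < m < n be integers, t_k = kπ/(n+1), x_k = cos t_k, λ_{n,k} = (π/(n+1)) sin² t_k. Define Φ_{n,k}^m(x) = λ_{n,k} ∑_{j=0}^{n+m−1} μ_{n,j}^m p_j(w₂,x) p_j(w₂,x_k), where μ_{n,j}^m = 1 for 0 ≤ j ≤ n−m and μ_{n,j}^m = (n+m−j)/(2m) for n−m < j < n+m. Then for t ∈ (0,π) with t ∉ {t_1,…,t_n} and x = cos t, Φ_{n,k}^m(x) = ((−1)^k sin t_k/(4m(n+1))) · (sin((n+1)t)/sin t) · ( sin(m(t−t_k))/sin²((t−t_k)/2) − sin(m(t+t_k))/sin²((t+t_k)/2) ). -/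

import Mathlib

open Real

/-- Orthonormal Chebyshev polynomials of the second kind, as functions on `[-1,1]`:
`p_j(cos t) = √(2/π) sin((j+1)t)/sin t`. -/
noncomputable def chebP2 (j : ℕ) (x : ℝ) : ℝ :=
  Real.sqrt (2 / π) * (Real.sin ((j + 1) * Real.arccos x) / Real.sin (Real.arccos x))

/-- The de la Vallée Poussin filter. -/
noncomputable def vpFilter (n m j : ℕ) : ℝ :=
  if j + m ≤ n then 1 else ((n : ℝ) + m - j) / (2 * m)

/-- Chebyshev nodes of the second kind: `t_k = kπ/(n+1)`. -/
noncomputable def chebNode2 (n k : ℕ) : ℝ := (k : ℝ) * π / (n + 1)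

/-- Christoffel numbers for `w₂`: `λ_{n,k} = (π/(n+1)) sin² t_k`. -/
noncomputable def chebLambda2 (n k : ℕ) : ℝ := (π / (n + 1)) * Real.sin (chebNode2 n k) ^ 2

/-- Fundamental VP polynomials for `w₂`. -/
noncomputable def vpPhi2 (n m k : ℕ) (x : ℝ) : ℝ :=
  chebLambda2 n k * ∑ j ∈ Finset.range (n + m),
    vpFilter n m j * chebP2 j x * chebP2 j (Real.cos (chebNode2 n k))


lemma sum_cos_tel (u : ℝ) (L : ℕ) :
    (∑ j ∈ Finset.range L, Real.cos ((j + 1) * u)) * (2 * Real.sin (u / 2))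
      = Real.sin ((L + 1 / 2) * u) - Real.sin (u / 2) := by
  induction L with
  | zero => rw [show ((0 : ℕ) + 1 / 2 : ℝ) * u = u / 2 from by push_cast; ring]; simp
  | succ L ih =>
    rw [Finset.sum_range_succ, add_mul, ih]
    have h := Real.sin_sub_sin ((L + 1 + 1 / 2) * u) ((L + 1 / 2) * u)
    push_cast
    have e1 : ((L + 1 + 1 / 2) * u - (L + 1 / 2) * u) / 2 = u / 2 := by ring
    have e2 : ((L + 1 + 1 / 2) * u + (L + 1 / 2) * u) / 2 = (L + 1) * u := by ring
    rw [e1, e2] at h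
    linarith [h]

lemma sum_sin_tel (u : ℝ) (a N : ℕ) :
    (∑ i ∈ Finset.range N, Real.sin (((a : ℝ) + i + 1 / 2) * u)) * (2 * Real.sin (u / 2))
      = Real.cos (a * u) - Real.cos (((a : ℝ) + N) * u) := by
  induction N with
  | zero => simp
  | succ N ih =>
    rw [Finset.sum_range_succ, add_mul, ih]
    have h := Real.cos_sub_cos (((a : ℝ) + N) * u) (((a : ℝ) + N + 1) * u)
    have e1 : ((((a : ℝ) + N) * u + ((a : ℝ) + N + 1) * u)) / 2 = ((a : ℝ) + N + 1 / 2) * u := by ring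
    have e2 : ((((a : ℝ) + N) * u - ((a : ℝ) + N + 1) * u)) / 2 = -(u / 2) := by ring
    rw [e1, e2, Real.sin_neg] at h
    push_cast
    rw [show ((a : ℝ) + ((N : ℝ) + 1)) * u = ((a : ℝ) + (N : ℝ) + 1) * u from by ring]
    linarith [h]

lemma vp_swap (a b : ℕ) (f : ℕ → ℝ) :
    ∑ l ∈ Finset.Ico a b, ∑ j ∈ Finset.range l, f j
      = ∑ j ∈ Finset.range b, ((b - max a (j + 1) : ℕ) : ℝ) * f j := by
  calc ∑ l ∈ Finset.Ico a b, ∑ j ∈ Finset.range l, f j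
      = ∑ l ∈ Finset.Ico a b, ∑ j ∈ Finset.range b, if j < l then f j else 0 := by
        refine Finset.sum_congr rfl fun l hl => ?_
        rw [Finset.mem_Ico] at hl
        rw [← Finset.sum_filter]
        congr 1
        ext x
        simp only [Finset.mem_filter, Finset.mem_range]
        omega
    _ = ∑ j ∈ Finset.range b, ∑ l ∈ Finset.Ico a b, if j < l then f j else 0 :=
        Finset.sum_comm
    _ = ∑ j ∈ Finset.range b, ((b - max a (j + 1) : ℕ) : ℝ) * f j := by
        refine Finset.sum_congr rfl fun j hj => ?_
        rw [← Finset.sum_filter]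
        have hf : (Finset.Ico a b).filter (fun l => j < l) = Finset.Ico (max a (j + 1)) b := by
          ext x
          simp only [Finset.mem_filter, Finset.mem_Ico, max_le_iff]
          omega
        rw [hf, Finset.sum_const, Nat.card_Ico, nsmul_eq_mul]

lemma vp_key (n m : ℕ) (hm : 0 < m) (hmn : m ≤ n) (u : ℝ) :
    (∑ j ∈ Finset.range (n + m),
        (((n + m + 1) - max (n - m + 1) (j + 1) : ℕ) : ℝ) * Real.cos ((j + 1) * u))
      * (4 * Real.sin (u / 2) ^ 2)
    = 2 * Real.sin (((n : ℝ) + 1) * u) * Real.sin (m * u) - 4 * m * Real.sin (u / 2) ^ 2 := by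
  set s := Real.sin (u / 2) with hs
  have h0 : (∑ j ∈ Finset.range (n + m),
        (((n + m + 1) - max (n - m + 1) (j + 1) : ℕ) : ℝ) * Real.cos ((j + 1) * u))
      = ∑ j ∈ Finset.range (n + m + 1),
        (((n + m + 1) - max (n - m + 1) (j + 1) : ℕ) : ℝ) * Real.cos ((j + 1) * u) := by
    rw [Finset.sum_range_succ]
    have : ((n + m + 1) - max (n - m + 1) (n + m + 1) : ℕ) = 0 := by omega
    rw [this]
    simp
  rw [h0, ← vp_swap (n - m + 1) (n + m + 1)]
  have hexp : ∀ l : ℕ, (∑ j ∈ Finset.range l, Real.cos ((j + 1) * u)) * (4 * s ^ 2)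
      = (Real.sin (((l : ℝ) + 1 / 2) * u) - s) * (2 * s) := by
    intro l
    have h := sum_cos_tel u l
    calc (∑ j ∈ Finset.range l, Real.cos ((j + 1) * u)) * (4 * s ^ 2)
        = ((∑ j ∈ Finset.range l, Real.cos ((j + 1) * u)) * (2 * s)) * (2 * s) := by ring
      _ = (Real.sin (((l : ℝ) + 1 / 2) * u) - s) * (2 * s) := by rw [h]
  rw [Finset.sum_mul]
  rw [Finset.sum_congr rfl fun l _ => hexp l]
  have hsub : ∑ l ∈ Finset.Ico (n - m + 1) (n + m + 1),
        (Real.sin (((l : ℝ) + 1 / 2) * u) - s) * (2 * s)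
      = (∑ l ∈ Finset.Ico (n - m + 1) (n + m + 1), Real.sin (((l : ℝ) + 1 / 2) * u)) * (2 * s)
        - (2 * m : ℝ) * (s * (2 * s)) := by
    have e : ∀ l ∈ Finset.Ico (n - m + 1) (n + m + 1),
        (Real.sin (((l : ℝ) + 1 / 2) * u) - s) * (2 * s)
          = Real.sin (((l : ℝ) + 1 / 2) * u) * (2 * s) - s * (2 * s) := fun l _ => by ring
    rw [Finset.sum_congr rfl e, Finset.sum_sub_distrib, Finset.sum_const, Nat.card_Ico,
      ← Finset.sum_mul]
    have hc : (n + m + 1) - (n - m + 1) = 2 * m := by omega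
    rw [hc, nsmul_eq_mul]
    push_cast
    ring
  rw [hsub]
  have hico : ∑ l ∈ Finset.Ico (n - m + 1) (n + m + 1), Real.sin (((l : ℝ) + 1 / 2) * u)
      = ∑ i ∈ Finset.range (2 * m), Real.sin ((((n - m + 1 : ℕ) : ℝ) + i + 1 / 2) * u) := by
    rw [Finset.sum_Ico_eq_sum_range]
    have : (n + m + 1) - (n - m + 1) = 2 * m := by omega
    rw [this]
    refine Finset.sum_congr rfl fun i _ => ?_
    congr 1
    push_cast
    ring
  rw [hico]
  have htel := sum_sin_tel u (n - m + 1) (2 * m)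
  rw [← hs] at htel
  have hcast : ((n - m + 1 : ℕ) : ℝ) = (n : ℝ) - m + 1 := by
    push_cast [Nat.cast_sub hmn]
    ring
  have hcc' : Real.cos (((n - m + 1 : ℕ) : ℝ) * u)
      - Real.cos ((((n - m + 1 : ℕ) : ℝ) + ((2 * m : ℕ) : ℝ)) * u)
      = 2 * Real.sin (((n : ℝ) + 1) * u) * Real.sin ((m : ℝ) * u) := by
    rw [hcast]
    push_cast
    rw [Real.cos_sub_cos]
    rw [show ((((n : ℝ) - m + 1) * u + ((n : ℝ) - m + 1 + 2 * m) * u)) / 2 = ((n : ℝ) + 1) * u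
      from by ring]
    rw [show ((((n : ℝ) - m + 1) * u - ((n : ℝ) - m + 1 + 2 * m) * u)) / 2 = -((m : ℝ) * u)
      from by ring]
    rw [Real.sin_neg]
    ring
  rw [htel, hcc']
  ring


/-- compact trigonometric form of the fundamental VP polynomials for `w₂`. -/
theorem stmt_10 (m n : ℕ) (hm : 0 < m) (hmn : m < n)
    (k : ℕ) (hk1 : 1 ≤ k) (hkn : k ≤ n)
    (t : ℝ) (ht : t ∈ Set.Ioo 0 π)
    (htk : ∀ k' : ℕ, 1 ≤ k' → k' ≤ n → t ≠ chebNode2 n k') :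
    vpPhi2 n m k (Real.cos t) =
      ((-1 : ℝ) ^ k * Real.sin (chebNode2 n k) / (4 * m * (n + 1))) *
        (Real.sin ((n + 1) * t) / Real.sin t) *
        (Real.sin (m * (t - chebNode2 n k)) / Real.sin ((t - chebNode2 n k) / 2) ^ 2
          - Real.sin (m * (t + chebNode2 n k)) / Real.sin ((t + chebNode2 n k) / 2) ^ 2) := by
  obtain ⟨ht0, htπ⟩ := ht
  have hπ := Real.pi_pos
  unfold vpPhi2 chebLambda2
  set τ := chebNode2 n k with hτdef
  have hn1 : (0:ℝ) < (n:ℝ) + 1 := by positivity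
  have hk0 : (0:ℝ) < (k:ℝ) := by exact_mod_cast hk1
  have hτ0 : 0 < τ := by
    rw [hτdef]; unfold chebNode2; positivity
  have hτπ : τ < π := by
    rw [hτdef]; unfold chebNode2
    rw [div_lt_iff₀ hn1]
    have hklt : (k:ℝ) < (n:ℝ) + 1 := by exact_mod_cast Nat.lt_succ_of_le hkn
    nlinarith
  have hsτ : 0 < Real.sin τ := Real.sin_pos_of_pos_of_lt_pi hτ0 hτπ
  have hst : 0 < Real.sin t := Real.sin_pos_of_pos_of_lt_pi ht0 htπ
  have htne : t ≠ τ := htk k hk1 hkn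
  have hu1 : Real.sin ((t - τ) / 2) ≠ 0 := by
    intro h
    rw [Real.sin_eq_zero_iff] at h
    obtain ⟨z, hz⟩ := h
    have h1 : (t - τ) / 2 < π / 2 := by linarith
    have h2 : -(π / 2) < (t - τ) / 2 := by linarith
    have hzl : (z : ℝ) < 1 := by nlinarith
    have hzg : (-1 : ℝ) < (z : ℝ) := by nlinarith
    have hz1 : z < 1 := by exact_mod_cast hzl
    have hz2 : -1 < z := by exact_mod_cast hzg
    have : z = 0 := by omega
    rw [this] at hz
    simp at hz
    exact htne (by linarith)
  have hu2 : Real.sin ((t + τ) / 2) ≠ 0 :=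
    ne_of_gt (Real.sin_pos_of_pos_of_lt_pi (by positivity) (by linarith))
  have hat : Real.arccos (Real.cos t) = t := Real.arccos_cos ht0.le htπ.le
  have haτ : Real.arccos (Real.cos τ) = τ := Real.arccos_cos hτ0.le hτπ.le
  have hsq : Real.sqrt (2 / π) * Real.sqrt (2 / π) = 2 / π :=
    Real.mul_self_sqrt (by positivity)
  have hkπ : ((n:ℝ) + 1) * τ = (k:ℝ) * π := by
    rw [hτdef]; unfold chebNode2; field_simp
  have hm' : ((m:ℝ)) ≠ 0 := Nat.cast_ne_zero.mpr hm.ne'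
  -- termwise rewrite
  have hterm : ∀ j ∈ Finset.range (n + m),
      vpFilter n m j * chebP2 j (Real.cos t) * chebP2 j (Real.cos τ)
      = (1 / π * (Real.sin t)⁻¹ * (Real.sin τ)⁻¹ * (2 * (m:ℝ))⁻¹) *
          (((n + m + 1 - max (n - m + 1) (j + 1) : ℕ) : ℝ) * Real.cos ((↑j + 1) * (t - τ)))
        - (1 / π * (Real.sin t)⁻¹ * (Real.sin τ)⁻¹ * (2 * (m:ℝ))⁻¹) *
          (((n + m + 1 - max (n - m + 1) (j + 1) : ℕ) : ℝ) * Real.cos ((↑j + 1) * (t + τ))) := by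
    intro j hj
    rw [Finset.mem_range] at hj
    have hss : Real.cos ((↑j + 1) * (t - τ)) - Real.cos ((↑j + 1) * (t + τ))
        = 2 * Real.sin ((↑j + 1) * t) * Real.sin ((↑j + 1) * τ) := by
      rw [Real.cos_sub_cos,
        show (((j:ℝ) + 1) * (t - τ) + ((j:ℝ) + 1) * (t + τ)) / 2 = ((j:ℝ) + 1) * t from by ring,
        show (((j:ℝ) + 1) * (t - τ) - ((j:ℝ) + 1) * (t + τ)) / 2 = -(((j:ℝ) + 1) * τ) from by
          ring,
        Real.sin_neg]
      ring
    unfold chebP2 vpFilter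
    rw [hat, haτ]
    set C := 1 / π * (Real.sin t)⁻¹ * (Real.sin τ)⁻¹ * (2 * (m:ℝ))⁻¹ with hC
    set w := ((n + m + 1 - max (n - m + 1) (j + 1) : ℕ) : ℝ) with hw
    have hrhs : C * (w * Real.cos ((↑j + 1) * (t - τ))) - C * (w * Real.cos ((↑j + 1) * (t + τ)))
        = C * w * (2 * Real.sin ((↑j + 1) * t) * Real.sin ((↑j + 1) * τ)) := by
      rw [← hss]; ring
    rw [hrhs]
    by_cases hc : j + m ≤ n
    · rw [if_pos hc]
      have hwv : (n + m + 1 - max (n - m + 1) (j + 1) : ℕ) = 2 * m := by omega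
      rw [hw, hwv]
      push_cast
      rw [hC]
      calc (1:ℝ) * (Real.sqrt (2/π) * (Real.sin ((↑j + 1) * t) / Real.sin t)) *
            (Real.sqrt (2/π) * (Real.sin ((↑j + 1) * τ) / Real.sin τ))
          = (Real.sqrt (2/π) * Real.sqrt (2/π)) *
            ((Real.sin ((↑j + 1) * t) / Real.sin t) *
              (Real.sin ((↑j + 1) * τ) / Real.sin τ)) := by ring
        _ = (2/π) * ((Real.sin ((↑j + 1) * t) / Real.sin t) *
              (Real.sin ((↑j + 1) * τ) / Real.sin τ)) := by rw [hsq]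
        _ = _ := by field_simp
    · rw [if_neg hc]
      have hwv : (n + m + 1 - max (n - m + 1) (j + 1) : ℕ) = n + m - j := by omega
      rw [hw, hwv]
      have hcast : ((n + m - j : ℕ) : ℝ) = (n:ℝ) + m - j := by
        have : j ≤ n + m := hj.le
        push_cast [Nat.cast_sub this]
        ring
      rw [hcast, hC]
      calc ((n:ℝ) + m - j) / (2 * m) * (Real.sqrt (2/π) * (Real.sin ((↑j + 1) * t) / Real.sin t)) *
            (Real.sqrt (2/π) * (Real.sin ((↑j + 1) * τ) / Real.sin τ))
          = (Real.sqrt (2/π) * Real.sqrt (2/π)) * (((n:ℝ) + m - j) / (2 * m) *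
              ((Real.sin ((↑j + 1) * t) / Real.sin t) *
                (Real.sin ((↑j + 1) * τ) / Real.sin τ))) := by ring
        _ = (2/π) * (((n:ℝ) + m - j) / (2 * m) *
              ((Real.sin ((↑j + 1) * t) / Real.sin t) *
                (Real.sin ((↑j + 1) * τ) / Real.sin τ))) := by rw [hsq]
        _ = _ := by field_simp
  rw [Finset.sum_congr rfl hterm, Finset.sum_sub_distrib, ← Finset.mul_sum, ← Finset.mul_sum]
  -- closed forms for the two cosine sums
  have hA := vp_key n m hm hmn.le (t - τ)
  have hB := vp_key n m hm hmn.le (t + τ)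
  have hA' : ∑ j ∈ Finset.range (n + m),
      ((n + m + 1 - max (n - m + 1) (j + 1) : ℕ) : ℝ) * Real.cos ((↑j + 1) * (t - τ))
      = (2 * Real.sin (((n:ℝ) + 1) * (t - τ)) * Real.sin ((m:ℝ) * (t - τ))
          - 4 * m * Real.sin ((t - τ) / 2) ^ 2) / (4 * Real.sin ((t - τ) / 2) ^ 2) := by
    rw [eq_div_iff (by positivity)]
    exact hA
  have hB' : ∑ j ∈ Finset.range (n + m),
      ((n + m + 1 - max (n - m + 1) (j + 1) : ℕ) : ℝ) * Real.cos ((↑j + 1) * (t + τ))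
      = (2 * Real.sin (((n:ℝ) + 1) * (t + τ)) * Real.sin ((m:ℝ) * (t + τ))
          - 4 * m * Real.sin ((t + τ) / 2) ^ 2) / (4 * Real.sin ((t + τ) / 2) ^ 2) := by
    rw [eq_div_iff (by positivity)]
    exact hB
  rw [hA', hB']
  have hsub1 : Real.sin (((n:ℝ) + 1) * (t - τ)) = (-1 : ℝ) ^ k * Real.sin (((n:ℝ) + 1) * t) := by
    have he : ((n:ℝ) + 1) * (t - τ) = ((n:ℝ) + 1) * t - ((k : ℤ) : ℝ) * π := by
      push_cast
      rw [mul_sub, hkπ]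
    rw [he, Real.sin_sub_int_mul_pi, zpow_natCast]
  have hsub2 : Real.sin (((n:ℝ) + 1) * (t + τ)) = (-1 : ℝ) ^ k * Real.sin (((n:ℝ) + 1) * t) := by
    have he : ((n:ℝ) + 1) * (t + τ) = ((n:ℝ) + 1) * t + ((k : ℤ) : ℝ) * π := by
      push_cast
      rw [mul_add, hkπ]
    rw [he, Real.sin_add_int_mul_pi, zpow_natCast]
  rw [hsub1, hsub2]
  have hm4 : ((-1:ℝ)^k) * ((-1:ℝ)^k) = 1 := by
    rw [← pow_add, ← two_mul, pow_mul]
    norm_num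
  field_simp
  ring
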